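/- Let f : ℝⁿ → ℝ be quasi-convex and upper semicontinuous with S^f_{<,0} ≠ ∅, satisfying property (sHöl) on S^f_{≤,0} with order δ > 0 and modulus L > 0, let c : ℝⁿ → ℝⁿ be a selection with c(x) ∈ ∂*f(x) \ {0} whenever f(x) > 0, and let P_f be the associated star subgradient projection. Then P_f is a cutter: ⟨P_f(x) − x, P_f(x) − y⟩ ≤ 0 for all x ∈ ℝⁿ and all y ∈ Fix P_f. -/

import Mathlib

/-- The star subdifferential of `f` at `x`. -/
def starSubdiff {n : ℕ} (f : EuclideanSpace ℝ (Fin n) → ℝ) (x : EuclideanSpace ℝ (Fin n)) :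
    Set (EuclideanSpace ℝ (Fin n)) :=
  {g | ∀ y : EuclideanSpace ℝ (Fin n), f y < f x → (inner ℝ g (y - x) : ℝ) ≤ 0}

/-- The star subgradient projection relative to `f`, with modulus `L`, order `δ` and
star subgradient selection `c`. -/
noncomputable def starProj {n : ℕ} (f : EuclideanSpace ℝ (Fin n) → ℝ) (L δ : ℝ)
    (c : EuclideanSpace ℝ (Fin n) → EuclideanSpace ℝ (Fin n)) (x : EuclideanSpace ℝ (Fin n)) :
    EuclideanSpace ℝ (Fin n) :=
  if 0 < f x then x - ((max (f x) 0 / L) ^ (1 / δ)) • (‖c x‖⁻¹ • c x) else x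

/-- The star subgradient projection is a cutter:
`⟪P_f x - x, P_f x - y⟫ ≤ 0` for every `x` and every fixed point `y` of `P_f`. -/
theorem starProj_isCutter {n : ℕ}
    (f : EuclideanSpace ℝ (Fin n) → ℝ) (δ L : ℝ) (hδ : 0 < δ) (hL : 0 < L)
    (hqc : ∀ lam : ℝ, Convex ℝ {y : EuclideanSpace ℝ (Fin n) | f y ≤ lam})
    (husc : ∀ lam : ℝ, IsOpen {y : EuclideanSpace ℝ (Fin n) | f y < lam})
    (hne : {y : EuclideanSpace ℝ (Fin n) | f y < 0}.Nonempty)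
    (hhol : ∀ q x' : EuclideanSpace ℝ (Fin n), f q ≤ 0 → |f x' - f q| ≤ L * ‖x' - q‖ ^ δ)
    (c : EuclideanSpace ℝ (Fin n) → EuclideanSpace ℝ (Fin n))
    (hc : ∀ x, 0 < f x → c x ∈ starSubdiff f x ∧ c x ≠ 0) :
    ∀ x y : EuclideanSpace ℝ (Fin n), starProj f L δ c y = y →
      (inner ℝ (starProj f L δ c x - x) (starProj f L δ c x - y) : ℝ) ≤ 0 := by
  intro x y hy
  by_cases hfx : 0 < f x
  swap
  · simp [starProj, hfx]
  obtain ⟨hsub, hcne⟩ := hc x hfx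
  have hncx : (0:ℝ) < ‖c x‖ := norm_pos_iff.mpr hcne
  -- the fixed point satisfies f y ≤ 0
  have hfy : f y ≤ 0 := by
    by_contra hfy
    push_neg at hfy
    obtain ⟨_, hcyne⟩ := hc y hfy
    have hncy : (0:ℝ) < ‖c y‖ := norm_pos_iff.mpr hcyne
    have hy' : y - ((max (f y) 0 / L) ^ (1 / δ)) • (‖c y‖⁻¹ • c y) = y := by
      simpa [starProj, hfy] using hy
    have h0 : ((max (f y) 0 / L) ^ (1 / δ)) • (‖c y‖⁻¹ • c y) = 0 := by
      have := sub_eq_self.mp hy'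
      exact this
    have hrpos : (0:ℝ) < (max (f y) 0 / L) ^ (1 / δ) := by
      apply Real.rpow_pos_of_pos
      have : max (f y) 0 = f y := max_eq_left hfy.le
      rw [this]
      positivity
    rcases smul_eq_zero.mp h0 with h | h
    · exact hrpos.ne' h
    · rcases smul_eq_zero.mp h with h' | h'
      · exact (inv_ne_zero hncy.ne') h'
      · exact hcyne h'
  set r : ℝ := (max (f x) 0 / L) ^ (1 / δ) with hrdef
  have hmax : max (f x) 0 = f x := max_eq_left hfx.le
  have hbase : (0:ℝ) < f x / L := by positivity
  have hrpos : (0:ℝ) < r := by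
    rw [hrdef, hmax]; exact Real.rpow_pos_of_pos hbase _
  have hrpow : L * r ^ δ = f x := by
    rw [hrdef, hmax, ← Real.rpow_mul hbase.le, one_div_mul_cancel hδ.ne', Real.rpow_one]
    field_simp
  set u : EuclideanSpace ℝ (Fin n) := ‖c x‖⁻¹ • c x with hudef
  have hPx : starProj f L δ c x = x - r • u := by simp [starProj, hfx, hrdef, hudef]
  set A : ℝ := (inner ℝ (c x) (x - y) : ℝ) with hAdef
  have hA0 : 0 ≤ A := by
    have := hsub y (lt_of_le_of_lt hfy hfx)
    have h2 : (inner ℝ (c x) (y - x) : ℝ) = -A := by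
      rw [hAdef, ← inner_neg_right]; congr 1; abel
    linarith [h2 ▸ this]
  have hcu : (inner ℝ (c x) u : ℝ) = ‖c x‖ := by
    rw [hudef, real_inner_smul_right, real_inner_self_eq_norm_sq]
    field_simp
  -- key inequality: r * ‖c x‖ ≤ A
  have hkey : r * ‖c x‖ ≤ A := by
    by_contra hlt
    push_neg at hlt
    set s : ℝ := (A / ‖c x‖ + r) / 2 with hsdef
    have hs1 : A / ‖c x‖ < s := by
      rw [hsdef]
      have : A / ‖c x‖ < r := by
        rw [div_lt_iff₀ hncx]; linarith
      linarith
    have hs2 : s < r := by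
      rw [hsdef]
      have : A / ‖c x‖ < r := by
        rw [div_lt_iff₀ hncx]; linarith
      linarith
    have hs0 : 0 ≤ s := by
      have : 0 ≤ A / ‖c x‖ := div_nonneg hA0 hncx.le
      rw [hsdef]; linarith
    set z : EuclideanSpace ℝ (Fin n) := y + s • u with hzdef
    have hnu : ‖u‖ = 1 := by
      rw [hudef, norm_smul, norm_inv, norm_norm, inv_mul_cancel₀ hncx.ne']
    have hzy : ‖z - y‖ = s := by
      rw [hzdef]
      simp [norm_smul, hnu, abs_of_nonneg hs0]
    have hfz : f z < f x := by
      have h1 := hhol y z hfy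
      have h2 : f z - f y ≤ L * ‖z - y‖ ^ δ := le_trans (le_abs_self _) h1
      have h3 : ‖z - y‖ ^ δ < r ^ δ := by
        rw [hzy]
        exact Real.rpow_lt_rpow hs0 hs2 hδ
      nlinarith [hrpow]
    have h4 := hsub z hfz
    have h5 : (inner ℝ (c x) (z - x) : ℝ) = -A + s * ‖c x‖ := by
      have : z - x = (y - x) + s • u := by rw [hzdef]; abel
      rw [this, inner_add_right, real_inner_smul_right, hcu]
      congr 1
      rw [hAdef, ← inner_neg_right]; congr 1; abel
    rw [h5] at h4
    have : s * ‖c x‖ ≤ A := by linarith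
    have : s ≤ A / ‖c x‖ := (le_div_iff₀ hncx).mpr this
    linarith
  -- conclude
  rw [hPx]
  have hnu : ‖u‖ = 1 := by
    rw [hudef, norm_smul, norm_inv, norm_norm, inv_mul_cancel₀ hncx.ne']
  have e1 : x - r • u - x = -(r • u) := by abel
  have e2 : x - r • u - y = (x - y) - r • u := by abel
  have huxy : (inner ℝ u (x - y) : ℝ) = ‖c x‖⁻¹ * A := by
    rw [hudef, real_inner_smul_left, hAdef]
  have huu : (inner ℝ u u : ℝ) = 1 := by
    rw [real_inner_self_eq_norm_sq, hnu]; norm_num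
  rw [e1, e2]
  simp only [inner_neg_left, inner_sub_right, real_inner_smul_left, real_inner_smul_right,
    huxy, huu]
  have : r ≤ ‖c x‖⁻¹ * A := by
    rw [← div_eq_inv_mul, le_div_iff₀ hncx]
    linarith [hkey]
  have h6 : (inner ℝ u x : ℝ) - inner ℝ u y = ‖c x‖⁻¹ * A := by
    rw [← inner_sub_right]; exact huxy
  nlinarith [h6, mul_le_mul_of_nonneg_left this hrpos.le]
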